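/- Let (r_0, …, r_h) be a δ-sequence with conductor μ = (Σ_{k=1}^h (e_k − 1) r_k) − r_0 + 1. Assume μ ≥ 2 and (r_0,…,r_h) ≠ (3,2). Then 2 ≤ r_h ≤ μ − 2 and (d_h − 1)(r_h − 1) ≤ μ, so in particular d_h ≤ μ/(r_h − 1) + 1. -/

import Mathlib

/-- A sequence `r 0, …, r h` of positive integers, together with the chain of gcds
`d 1 = r 0`, `d (k+1) = gcd (d k) (r k)`, is *free* if `d (h+1) = 1` (so the `r k` are
coprime) and `e_k · r_k ∈ ⟨r_0, …, r_{k−1}⟩` for all `1 ≤ k ≤ h`, where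
`e k = d k / d (k+1)`. -/
def IsFreeSeq (h : ℕ) (r d : ℕ → ℕ) : Prop :=
  (∀ k ≤ h, 0 < r k) ∧
  d 1 = r 0 ∧
  (∀ k, 1 ≤ k → k ≤ h → d (k + 1) = Nat.gcd (d k) (r k)) ∧
  d (h + 1) = 1 ∧
  ∀ k, 1 ≤ k → k ≤ h →
    (d k / d (k + 1)) * r k ∈ AddSubmonoid.closure (r '' Set.Iio k)

/-- A free sequence `(r_0, …, r_h)` (with gcd chain `d`) is a *δ-sequence* if moreover
`r_k d_k > r_{k+1} d_{k+1}` for `1 ≤ k ≤ h−1` and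
`r_0 > r_1 > d_2 > d_3 > ⋯ > d_{h+1} = 1`. -/
def IsDeltaSeq (h : ℕ) (r d : ℕ → ℕ) : Prop :=
  IsFreeSeq h r d ∧ 1 ≤ h ∧
  (∀ k, 1 ≤ k → k + 1 ≤ h → r k * d k > r (k + 1) * d (k + 1)) ∧
  r 0 > r 1 ∧ r 1 > d 2 ∧
  ∀ k, 2 ≤ k → k ≤ h → d (k + 1) < d k

/-- Any positive element of the monoid generated by `r j`, `j < k`, is at least one of
the generators. -/
lemma closure_pos_ge (r : ℕ → ℕ) (k x : ℕ)
    (hx : x ∈ AddSubmonoid.closure (r '' Set.Iio k)) (hxpos : 0 < x) :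
    ∃ j < k, r j ≤ x := by
  revert hxpos
  induction hx using AddSubmonoid.closure_induction with
  | mem y hy =>
    obtain ⟨j, hj, rfl⟩ := hy
    exact fun _ => ⟨j, hj, le_refl _⟩
  | zero => omega
  | add x y hx hy ihx ihy =>
    intro hpos
    rcases Nat.eq_zero_or_pos x with hx0 | hx0
    · obtain ⟨j, hj, hle⟩ := ihy (by omega)
      exact ⟨j, hj, by omega⟩
    · obtain ⟨j, hj, hle⟩ := ihx hx0
      exact ⟨j, hj, by omega⟩

theorem delta_sequence_last_generator_bounds (h : ℕ) (r d : ℕ → ℕ)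
    (hdelta : IsDeltaSeq h r d) (μ : ℕ)
    (hμ : (μ : ℤ)
      = (∑ k ∈ Finset.Icc 1 h, (((d k / d (k + 1) : ℕ) : ℤ) - 1) * (r k : ℤ))
        - (r 0 : ℤ) + 1)
    (hμ2 : 2 ≤ μ) (hne : ¬ (h = 1 ∧ r 0 = 3 ∧ r 1 = 2)) :
    2 ≤ r h ∧ r h ≤ μ - 2 ∧ (d h - 1) * (r h - 1) ≤ μ ∧
      (d h : ℝ) ≤ (μ : ℝ) / ((r h : ℝ) - 1) + 1 := by
  obtain ⟨⟨hpos, hd1, hgcd, hdh1, hmem⟩, h1, hrd, hr01, hr1d2, hdec⟩ := hdelta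
  -- positivity of the d's
  have dpos : ∀ k, 1 ≤ k → k ≤ h + 1 → 0 < d k := by
    intro k hk1 hk
    rcases Nat.exists_eq_add_of_le hk1 with ⟨m, rfl⟩
    rcases Nat.eq_zero_or_pos m with rfl | hm
    · rw [hd1]; exact hpos 0 (by omega)
    · rw [show 1 + m = (m - 1 + 1) + 1 by omega, hgcd (m - 1 + 1) (by omega) (by omega)]
      exact Nat.gcd_pos_of_pos_right _ (hpos _ (by omega))
  have ddvd : ∀ k, 1 ≤ k → k ≤ h → d (k + 1) ∣ d k := by
    intro k hk1 hk; rw [hgcd k hk1 hk]; exact Nat.gcd_dvd_left _ _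
  have ddvdr : ∀ k, 1 ≤ k → k ≤ h → d (k + 1) ∣ r k := by
    intro k hk1 hk; rw [hgcd k hk1 hk]; exact Nat.gcd_dvd_right _ _
  have chain : ∀ j, 1 ≤ j → ∀ k, j ≤ k → k ≤ h + 1 → d k ∣ d j := by
    intro j hj k
    induction k with
    | zero => omega
    | succ n ih =>
      intro hjk hk
      rcases Nat.eq_or_lt_of_le hjk with h' | h'
      · rw [← h']
      · exact (ddvd n (by omega) (by omega)).trans (ih (by omega) (by omega))
  have dvdr : ∀ j k, j < k → k ≤ h + 1 → d k ∣ r j := by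
    intro j k hjk hk
    rcases Nat.eq_zero_or_pos j with rfl | hj
    · rw [← hd1]; exact chain 1 le_rfl k hjk hk
    · exact (chain (j + 1) (by omega) k (by omega) hk).trans (ddvdr j hj (by omega))
  have epos : ∀ k, 1 ≤ k → k ≤ h → 1 ≤ d k / d (k + 1) := by
    intro k hk1 hk
    exact (Nat.one_le_div_iff (dpos (k + 1) (by omega) (by omega))).mpr
      (Nat.le_of_dvd (dpos k (by omega) (by omega)) (ddvd k hk1 hk))
  have emul : ∀ k, 1 ≤ k → k ≤ h → d k / d (k + 1) * d (k + 1) = d k := by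
    intro k hk1 hk; exact Nat.div_mul_cancel (ddvd k hk1 hk)
  -- strictly decreasing chain
  have sdec : ∀ a, 2 ≤ a → ∀ b, a < b → b ≤ h + 1 → d b < d a := by
    intro a ha b
    induction b with
    | zero => omega
    | succ n ih =>
      intro hab hb
      rcases Nat.eq_or_lt_of_le (by omega : a ≤ n) with h' | h'
      · rw [← h'] at *; exact hdec a ha (by omega)
      · exact lt_trans (hdec n (by omega) (by omega)) (ih h' (by omega))
  -- the key lemma: d k is not in the monoid generated by the previous generators
  have notMem : ∀ k, 2 ≤ k → k ≤ h → d k ∉ AddSubmonoid.closure (r '' Set.Iio k) := by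
    intro k hk2
    induction k, hk2 using Nat.le_induction with
    | base =>
      intro h2h hcl
      obtain ⟨j, hj, hle⟩ := closure_pos_ge r 2 (d 2) hcl (dpos 2 (by omega) (by omega))
      have hdvd : d 2 ∣ r j := dvdr j 2 hj (by omega)
      have heq : r j = d 2 := le_antisymm hle (Nat.le_of_dvd (hpos j (by omega)) hdvd)
      interval_cases j <;> omega
    | succ n hn ih =>
      intro hkh hcl
      obtain ⟨j, hj, hle⟩ :=
        closure_pos_ge r (n + 1) (d (n + 1)) hcl (dpos (n + 1) (by omega) (by omega))
      have hdvd : d (n + 1) ∣ r j := dvdr j (n + 1) hj (by omega)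
      have heq : r j = d (n + 1) := le_antisymm hle (Nat.le_of_dvd (hpos j (by omega)) hdvd)
      rcases Nat.eq_zero_or_pos j with rfl | hj1
      · -- r 0 = d (n+1) is impossible since d (n+1) ≤ d 2 ≤ r 1 < r 0
        have hle2 : d (n + 1) ≤ d 2 :=
          Nat.le_of_dvd (dpos 2 (by omega) (by omega))
            (chain 2 (by omega) (n + 1) (by omega) (by omega))
        omega
      · have hj2 : d (j + 1) = d (n + 1) := by
          rw [hgcd j hj1 (by omega), heq]
          exact Nat.gcd_eq_right (chain j hj1 (n + 1) (by omega) (by omega))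
        rcases Nat.eq_or_lt_of_le (by omega : j + 1 ≤ n + 1) with h' | h'
        · -- j = n, so r n = d (n+1) and then d n is in the closure of earlier generators
          have hjn : j = n := by omega
          subst hjn
          have hdn : d j ∈ AddSubmonoid.closure (r '' Set.Iio j) := by
            have hm := hmem j (by omega) (by omega)
            rwa [heq, emul j (by omega) (by omega)] at hm
          exact ih (by omega) hdn
        · -- j + 1 < n + 1 contradicts the strictly decreasing chain
          have hlt : d (n + 1) < d (j + 1) := sdec (j + 1) (by omega) (n + 1) h' (by omega)
          omega
  -- 2 ≤ r h
  have hrh2 : 2 ≤ r h := by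
    by_contra hlt
    have hrh1 : r h = 1 := by have := hpos h le_rfl; omega
    rcases Nat.eq_or_lt_of_le h1 with hh | hh
    · -- h = 1 : r 1 > d 2 = 1 contradicts r 1 = 1
      rw [← hh] at hrh1
      have : d 2 = 1 := by rw [← hh] at hdh1; exact hdh1
      omega
    · have hdh : d h ∈ AddSubmonoid.closure (r '' Set.Iio h) := by
        have hm := hmem h h1 le_rfl
        rwa [hdh1, Nat.div_one, hrh1, mul_one] at hm
      exact notMem h (by omega) le_rfl hdh
  -- the natural-number sum
  set S := ∑ k ∈ Finset.Icc 1 h, (d k / d (k + 1) - 1) * r k with hSdef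
  have hcast : (μ : ℤ) = (S : ℤ) - (r 0 : ℤ) + 1 := by
    rw [hμ, hSdef]
    congr 2
    rw [Nat.cast_sum]
    apply Finset.sum_congr rfl
    intro k hk
    rw [Finset.mem_Icc] at hk
    have he := epos k hk.1 hk.2
    push_cast [Nat.cast_sub he]
    ring
  have hkey : μ + r 0 = S + 1 := by omega
  -- the bound on the first summand
  have hIio1 : r '' Set.Iio 1 = {r 0} := by
    have : Set.Iio (1 : ℕ) = {0} := by ext x; simp [Nat.lt_one_iff]
    rw [this, Set.image_singleton]
  have he1 : 2 * r 0 ≤ d 1 / d 2 * r 1 := by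
    have hm : d 1 / d 2 * r 1 ∈ AddSubmonoid.closure ({r 0} : Set ℕ) := by
      have := hmem 1 le_rfl h1
      rwa [hIio1] at this
    obtain ⟨n, hn⟩ := AddSubmonoid.mem_closure_singleton.mp hm
    rw [smul_eq_mul] at hn
    have hpos1 : 0 < d 1 / d 2 * r 1 := Nat.mul_pos (epos 1 le_rfl h1) (hpos 1 h1)
    have hn1 : 1 ≤ n := by
      rcases Nat.eq_zero_or_pos n with rfl | hn1
      · rw [zero_mul] at hn; omega
      · exact hn1
    rcases Nat.eq_or_lt_of_le hn1 with hn2 | hn2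
    · -- n = 1 would force r 1 = d 2
      exfalso
      rw [← hn2, one_mul] at hn
      have hd2 : d 1 / d 2 * d 2 = d 1 := emul 1 le_rfl h1
      have heq2 : d 1 / d 2 * r 1 = d 1 / d 2 * d 2 := by
        rw [hd2, ← hn]; exact hd1.symm
      have := Nat.eq_of_mul_eq_mul_left (show 0 < d 1 / d 2 from epos 1 le_rfl h1) heq2
      omega
    · calc 2 * r 0 ≤ n * r 0 := Nat.mul_le_mul hn2 (le_refl (r 0))
        _ = d 1 / d 2 * r 1 := hn
  -- main case split
  have hmain : r h + 2 ≤ μ ∧ (d h - 1) * (r h - 1) ≤ μ := by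
    rcases Nat.eq_or_lt_of_le h1 with hh | hh
    · -- h = 1
      have hh' : h = 1 := hh.symm
      subst hh'
      have hd2 : d 2 = 1 := hdh1
      have hS1 : S = (r 0 - 1) * r 1 := by
        rw [hSdef, Finset.Icc_self, Finset.sum_singleton]
        rw [show (1 + 1 : ℕ) = 2 from rfl, hd2, Nat.div_one, hd1]
      have hcop : Nat.gcd (r 0) (r 1) = 1 := by
        have hg := hgcd 1 le_rfl le_rfl
        rw [hd1] at hg
        rw [← hg]; exact hd2
      have hne' : ¬(r 0 = 3 ∧ r 1 = 2) := fun hc => hne ⟨rfl, hc⟩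
      rw [hS1] at hkey
      obtain ⟨c, hc⟩ : ∃ c, r 0 = c + 1 := ⟨r 0 - 1, by omega⟩
      obtain ⟨e, he⟩ : ∃ e, r 1 = e + 1 := ⟨r 1 - 1, by omega⟩
      have hμeq : μ = c * e := by
        rw [hc, he] at hkey
        rw [Nat.add_sub_cancel, Nat.mul_succ] at hkey
        omega
      have hce : e + 1 ≤ c := by omega
      have he1' : 1 ≤ e := by have : 2 ≤ r 1 := hrh2; omega
      constructor
      · -- r 1 + 2 ≤ μ, i.e. e + 3 ≤ c * e
        rcases Nat.eq_or_lt_of_le (show 2 ≤ r 1 from hrh2) with hr2 | hr2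
        · -- r 1 = 2, so e = 1, need r 0 ≥ 5
          have hee : e = 1 := by omega
          have hodd : ¬ (2 ∣ r 0) := by
            intro hdvd
            have h2g : (2 : ℕ) ∣ Nat.gcd (r 0) (r 1) := Nat.dvd_gcd hdvd (by omega)
            rw [hcop] at h2g
            omega
          have hr03 : r 0 ≠ 3 := fun h3 => hne' ⟨h3, by omega⟩
          have h5 : 5 ≤ r 0 := by omega
          rw [hμeq, hee, mul_one]; omega
        · -- r 1 ≥ 3, so e ≥ 2
          have he2 : 2 ≤ e := by omega
          rw [hμeq, he]
          have p1 : (e + 1) * e ≤ c * e := Nat.mul_le_mul hce (le_refl e)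
          have p2 : 2 * e ≤ e * e := Nat.mul_le_mul he2 (le_refl e)
          have p3 : (e + 1) * e = e * e + e := by ring
          linarith
      · -- (d 1 - 1) * (r 1 - 1) ≤ μ ; in fact equality
        rw [hd1, hc, he, hμeq, Nat.add_sub_cancel, Nat.add_sub_cancel]
    · -- h ≥ 2
      have hdh2 : 2 ≤ d h := by
        have := hdec h (by omega) le_rfl
        omega
      have hsub : ({1, h} : Finset ℕ) ⊆ Finset.Icc 1 h := by
        intro x hx
        simp only [Finset.mem_insert, Finset.mem_singleton] at hx
        rw [Finset.mem_Icc]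
        rcases hx with rfl | rfl <;> omega
      have hsum := Finset.sum_le_sum_of_subset (f := fun k => (d k / d (k + 1) - 1) * r k) hsub
      rw [Finset.sum_insert (by simp; omega), Finset.sum_singleton] at hsum
      rw [← hSdef] at hsum
      rw [hdh1, Nat.div_one] at hsum
      -- bound the first term
      have ht1 : r 0 + 1 ≤ (d 1 / d (1 + 1) - 1) * r 1 := by
        have hef : 1 ≤ d 1 / d 2 := epos 1 le_rfl (by omega)
        have hexp : (d 1 / d 2 - 1) * r 1 + r 1 = d 1 / d 2 * r 1 := by
          obtain ⟨f, hf⟩ : ∃ f, d 1 / d 2 = f + 1 := ⟨d 1 / d 2 - 1, by omega⟩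
          rw [hf, Nat.add_sub_cancel]; ring
        show r 0 + 1 ≤ (d 1 / d 2 - 1) * r 1
        linarith
      have hμge : (d h - 1) * r h + 2 ≤ μ := by linarith
      have hrq : r h ≤ (d h - 1) * r h := Nat.le_mul_of_pos_left (r h) (by omega)
      constructor
      · linarith
      · have hle2 : (d h - 1) * (r h - 1) ≤ (d h - 1) * r h :=
          Nat.mul_le_mul (le_refl _) (Nat.sub_le _ _)
        linarith
  obtain ⟨hμ3, hprod⟩ := hmain
  refine ⟨hrh2, by omega, hprod, ?_⟩
  -- the real inequality
  have hd1' : 1 ≤ d h := dpos h h1 (by omega)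
  have h3 : ((d h : ℝ) - 1) * ((r h : ℝ) - 1) ≤ (μ : ℝ) := by
    have := (Nat.cast_le (α := ℝ)).mpr hprod
    rwa [Nat.cast_mul, Nat.cast_sub hd1', Nat.cast_sub (by omega), Nat.cast_one] at this
  have hrpos : (0 : ℝ) < (r h : ℝ) - 1 := by
    have : (2 : ℝ) ≤ (r h : ℝ) := by exact_mod_cast hrh2
    linarith
  have hfin : (d h : ℝ) - 1 ≤ (μ : ℝ) / ((r h : ℝ) - 1) := (le_div_iff₀ hrpos).mpr h3
  linarith
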